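/- Let L be a Lie algebra over a field F and let e₁, e₂, e₃, e₄ ∈ L be elements that are linearly independent modulo Z(L) and satisfy L = Z(L) + span{e₁, e₂, e₃, e₄}. Suppose ⁅e₁,e₃⁆ = ⁅e₁,e₄⁆ = ⁅e₂,e₃⁆ = ⁅e₂,e₄⁆ = 0 and the vectors ⁅e₁,e₂⁆ and ⁅e₃,e₄⁆ are linearly independent over F. Then the commuting graph Γ(L) is connected and diam(Γ(L)) = 3. -/

import Mathlib

private lemma walk_short {V : Type*} {G : SimpleGraph V} {u v : V} (p : G.Walk u v)
    (h : p.length ≤ 2) :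
    u = v ∨ G.Adj u v ∨ ∃ w, G.Adj u w ∧ G.Adj w v := by
  cases p with
  | nil => exact Or.inl rfl
  | cons h1 q =>
    cases q with
    | nil => exact Or.inr (Or.inl h1)
    | cons h2 r =>
      cases r with
      | nil => exact Or.inr (Or.inr ⟨_, h1, h2⟩)
      | cons h3 s => simp [SimpleGraph.Walk.length_cons] at h

/-- The commuting graph of a Lie algebra `L` over `F`: vertices are the elements of
`L` outside the center, and two distinct vertices are adjacent iff they commute. -/
def commutingGraph (F : Type*) [CommRing F] (L : Type*) [LieRing L] [LieAlgebra F L] :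
    SimpleGraph {x : L // x ∉ LieAlgebra.center F L} where
  Adj x y := x ≠ y ∧ ⁅(x : L), (y : L)⁆ = 0
  symm := ⟨fun x y h => ⟨h.1.symm, by rw [← lie_skew, h.2, neg_zero]⟩⟩
  loopless := ⟨fun x h => h.1 rfl⟩

/-- let `e₁, e₂, e₃, e₄ ∈ L` be linearly independent modulo the center with
`L = Z(L) + span {e₁, e₂, e₃, e₄}`, with all cross brackets between `{e₁,e₂}` and `{e₃,e₄}`
zero and `⁅e₁,e₂⁆`, `⁅e₃,e₄⁆` linearly independent. Then the commuting graph of `L` is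
connected with diameter 3. -/
theorem stmt15 (F : Type*) [Field F] (L : Type*) [LieRing L] [LieAlgebra F L]
    (e₁ e₂ e₃ e₄ : L)
    (hli : LinearIndependent F fun i =>
      (Submodule.Quotient.mk (![e₁, e₂, e₃, e₄] i) :
        L ⧸ (LieAlgebra.center F L).toSubmodule))
    (hspan : (LieAlgebra.center F L).toSubmodule ⊔
      Submodule.span F {e₁, e₂, e₃, e₄} = ⊤)
    (h13 : ⁅e₁, e₃⁆ = 0) (h14 : ⁅e₁, e₄⁆ = 0) (h23 : ⁅e₂, e₃⁆ = 0) (h24 : ⁅e₂, e₄⁆ = 0)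
    (hbr : LinearIndependent F ![⁅e₁, e₂⁆, ⁅e₃, e₄⁆]) :
    (commutingGraph F L).Connected ∧ (commutingGraph F L).ediam = 3 := by
  classical
  have memZ : ∀ x : L, x ∈ LieAlgebra.center F L ↔ ∀ y : L, ⁅y, x⁆ = 0 := fun x =>
    LieModule.mem_maxTrivSubmodule F L L x
  have zlie : ∀ z y : L, z ∈ LieAlgebra.center F L → ⁅z, y⁆ = 0 := fun z y hz => by
    rw [← lie_skew, (memZ z).mp hz y, neg_zero]
  have hpair : ∀ s t : F, s • ⁅e₁, e₂⁆ + t • ⁅e₃, e₄⁆ = 0 → s = 0 ∧ t = 0 := by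
    intro s t hst
    have := LinearIndependent.pair_iff.mp hbr s t
    simpa using this hst
  -- coordinates modulo the center are unique
  have hcoords : ∀ a b c d : F, a • e₁ + b • e₂ + c • e₃ + d • e₄ ∈
      (LieAlgebra.center F L).toSubmodule → a = 0 ∧ b = 0 ∧ c = 0 ∧ d = 0 := by
    intro a b c d h
    have key := Fintype.linearIndependent_iff.mp hli ![a, b, c, d]
    have hsum : ∑ i, (![a, b, c, d] i) • (Submodule.Quotient.mk (![e₁, e₂, e₃, e₄] i) :
        L ⧸ (LieAlgebra.center F L).toSubmodule) = 0 := by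
      rw [Fin.sum_univ_four]
      simp only [Matrix.cons_val_zero, Matrix.cons_val_one, Matrix.head_cons,
        Matrix.cons_val_two, Matrix.tail_cons, Matrix.cons_val_three]
      rw [← Submodule.Quotient.mk_smul, ← Submodule.Quotient.mk_smul,
        ← Submodule.Quotient.mk_smul, ← Submodule.Quotient.mk_smul,
        ← Submodule.Quotient.mk_add, ← Submodule.Quotient.mk_add,
        ← Submodule.Quotient.mk_add]
      exact (Submodule.Quotient.mk_eq_zero _).mpr h
    have := key hsum
    exact ⟨this 0, this 1, this 2, this 3⟩
  -- decomposition of an arbitrary element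
  have hdec : ∀ x : L, ∃ (z : L) (a₁ a₂ a₃ a₄ : F), z ∈ LieAlgebra.center F L ∧
      x = z + (a₁ • e₁ + a₂ • e₂ + a₃ • e₃ + a₄ • e₄) := by
    intro x
    have hx : x ∈ (LieAlgebra.center F L).toSubmodule ⊔
        Submodule.span F {e₁, e₂, e₃, e₄} := hspan ▸ Submodule.mem_top
    obtain ⟨z, hz, s, hs, hzs⟩ := Submodule.mem_sup.mp hx
    rw [show ({e₁, e₂, e₃, e₄} : Set L) = insert e₁ (insert e₂ (insert e₃ {e₄})) from rfl]
      at hs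
    obtain ⟨a₁, s₁, hs₁, rfl⟩ := Submodule.mem_span_insert.mp hs
    obtain ⟨a₂, s₂, hs₂, rfl⟩ := Submodule.mem_span_insert.mp hs₁
    obtain ⟨a₃, s₃, hs₃, rfl⟩ := Submodule.mem_span_insert.mp hs₂
    obtain ⟨a₄, rfl⟩ := Submodule.mem_span_singleton.mp hs₃
    refine ⟨z, a₁, a₂, a₃, a₄, (LieSubmodule.mem_toSubmodule _).mp hz, ?_⟩
    rw [← hzs]; abel
  -- the bracket formula
  have h21 : ⁅e₂, e₁⁆ = -⁅e₁, e₂⁆ := by rw [← lie_skew]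
  have h43 : ⁅e₄, e₃⁆ = -⁅e₃, e₄⁆ := by rw [← lie_skew]
  have h31 : ⁅e₃, e₁⁆ = 0 := by rw [← lie_skew, h13, neg_zero]
  have h41 : ⁅e₄, e₁⁆ = 0 := by rw [← lie_skew, h14, neg_zero]
  have h32 : ⁅e₃, e₂⁆ = 0 := by rw [← lie_skew, h23, neg_zero]
  have h42 : ⁅e₄, e₂⁆ = 0 := by rw [← lie_skew, h24, neg_zero]
  have hbrk : ∀ (z w : L), z ∈ LieAlgebra.center F L → w ∈ LieAlgebra.center F L →
      ∀ a₁ a₂ a₃ a₄ b₁ b₂ b₃ b₄ : F,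
      ⁅z + (a₁ • e₁ + a₂ • e₂ + a₃ • e₃ + a₄ • e₄),
        w + (b₁ • e₁ + b₂ • e₂ + b₃ • e₃ + b₄ • e₄)⁆ =
      (a₁ * b₂ - a₂ * b₁) • ⁅e₁, e₂⁆ + (a₃ * b₄ - a₄ * b₃) • ⁅e₃, e₄⁆ := by
    intro z w hz hw a₁ a₂ a₃ a₄ b₁ b₂ b₃ b₄
    have hzy : ∀ y : L, ⁅z, y⁆ = 0 := fun y => zlie z y hz
    have hyw : ∀ y : L, ⁅y, w⁆ = 0 := fun y => (memZ w).mp hw y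
    simp only [add_lie, lie_add, smul_lie, lie_smul, hzy, hyw, lie_self,
      h13, h14, h23, h24, h31, h41, h32, h42, h21, h43,
      smul_zero, zero_add, add_zero, smul_neg, smul_smul]
    module
  -- characterization of central elements
  have hnc : ∀ (z : L) (a₁ a₂ a₃ a₄ : F), z ∈ LieAlgebra.center F L →
      ((z + (a₁ • e₁ + a₂ • e₂ + a₃ • e₃ + a₄ • e₄)) ∈ LieAlgebra.center F L ↔
        a₁ = 0 ∧ a₂ = 0 ∧ a₃ = 0 ∧ a₄ = 0) := by
    intro z a₁ a₂ a₃ a₄ hz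
    constructor
    · intro hc
      have hzero : ∀ y : L, ⁅z + (a₁ • e₁ + a₂ • e₂ + a₃ • e₃ + a₄ • e₄), y⁆ = 0 :=
        fun y => zlie _ y hc
      have hz0 : (0 : L) ∈ LieAlgebra.center F L := (LieAlgebra.center F L).zero_mem
    -- bracket with e₂ kills a₁, with e₁ kills a₂, with e₄ kills a₃, with e₃ kills a₄
      have k1 := hbrk z 0 hz hz0 a₁ a₂ a₃ a₄ 0 1 0 0
      have k2 := hbrk z 0 hz hz0 a₁ a₂ a₃ a₄ 1 0 0 0
      have k3 := hbrk z 0 hz hz0 a₁ a₂ a₃ a₄ 0 0 0 1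
      have k4 := hbrk z 0 hz hz0 a₁ a₂ a₃ a₄ 0 0 1 0
      simp only [zero_smul, one_smul, add_zero, zero_add, mul_one, mul_zero,
        sub_zero, zero_sub, hzero] at k1 k2 k3 k4
      have r1 := hpair a₁ 0 (by simpa using k1.symm)
      have r2 := hpair (-a₂) 0 (by simpa using k2.symm)
      have r3 := hpair 0 a₃ (by simpa using k3.symm)
      have r4 := hpair 0 (-a₄) (by simpa using k4.symm)
      exact ⟨r1.1, neg_eq_zero.mp r2.1, r3.2, neg_eq_zero.mp r4.2⟩
    · rintro ⟨rfl, rfl, rfl, rfl⟩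
      simpa using hz
  -- distinct coordinates give distinct elements
  have hne : ∀ (z w : L) (a₁ a₂ a₃ a₄ b₁ b₂ b₃ b₄ : F), z ∈ LieAlgebra.center F L →
      w ∈ LieAlgebra.center F L → ¬(a₁ = b₁ ∧ a₂ = b₂ ∧ a₃ = b₃ ∧ a₄ = b₄) →
      z + (a₁ • e₁ + a₂ • e₂ + a₃ • e₃ + a₄ • e₄) ≠
        w + (b₁ • e₁ + b₂ • e₂ + b₃ • e₃ + b₄ • e₄) := by
    intro z w a₁ a₂ a₃ a₄ b₁ b₂ b₃ b₄ hz hw hab heq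
    apply hab
    have key : (a₁ - b₁) • e₁ + (a₂ - b₂) • e₂ + (a₃ - b₃) • e₃ + (a₄ - b₄) • e₄ =
        (z + (a₁ • e₁ + a₂ • e₂ + a₃ • e₃ + a₄ • e₄)) -
          (w + (b₁ • e₁ + b₂ • e₂ + b₃ • e₃ + b₄ • e₄)) + (w - z) := by module
    rw [heq] at key
    have key' : (a₁ - b₁) • e₁ + (a₂ - b₂) • e₂ + (a₃ - b₃) • e₃ + (a₄ - b₄) • e₄ =
        w - z := by rw [key]; abel
    have hwz : w - z ∈ (LieAlgebra.center F L).toSubmodule :=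
      (LieSubmodule.mem_toSubmodule _).mpr (((LieAlgebra.center F L)).sub_mem hw hz)
    have := hcoords _ _ _ _ (key' ▸ hwz)
    exact ⟨sub_eq_zero.mp this.1, sub_eq_zero.mp this.2.1,
      sub_eq_zero.mp this.2.2.1, sub_eq_zero.mp this.2.2.2⟩
  -- versions with no central part
  have hz0 : (0 : L) ∈ LieAlgebra.center F L := (LieAlgebra.center F L).zero_mem
  have hnc0 : ∀ a₁ a₂ a₃ a₄ : F, ¬(a₁ = 0 ∧ a₂ = 0 ∧ a₃ = 0 ∧ a₄ = 0) →
      (a₁ • e₁ + a₂ • e₂ + a₃ • e₃ + a₄ • e₄) ∉ LieAlgebra.center F L := by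
    intro a₁ a₂ a₃ a₄ h hc
    exact h ((hnc 0 a₁ a₂ a₃ a₄ hz0).mp (by simpa using hc))
  have hbrk0 : ∀ a₁ a₂ a₃ a₄ b₁ b₂ b₃ b₄ : F,
      ⁅a₁ • e₁ + a₂ • e₂ + a₃ • e₃ + a₄ • e₄, b₁ • e₁ + b₂ • e₂ + b₃ • e₃ + b₄ • e₄⁆ =
      (a₁ * b₂ - a₂ * b₁) • ⁅e₁, e₂⁆ + (a₃ * b₄ - a₄ * b₃) • ⁅e₃, e₄⁆ := by
    intro a₁ a₂ a₃ a₄ b₁ b₂ b₃ b₄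
    simpa using hbrk 0 0 hz0 hz0 a₁ a₂ a₃ a₄ b₁ b₂ b₃ b₄
  have hne0 : ∀ a₁ a₂ a₃ a₄ b₁ b₂ b₃ b₄ : F, ¬(a₁ = b₁ ∧ a₂ = b₂ ∧ a₃ = b₃ ∧ a₄ = b₄) →
      a₁ • e₁ + a₂ • e₂ + a₃ • e₃ + a₄ • e₄ ≠ b₁ • e₁ + b₂ • e₂ + b₃ • e₃ + b₄ • e₄ := by
    intro a₁ a₂ a₃ a₄ b₁ b₂ b₃ b₄ h
    simpa using hne 0 0 a₁ a₂ a₃ a₄ b₁ b₂ b₃ b₄ hz0 hz0 h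
  -- step 1 : every vertex is within distance 1 of a pure (e₁,e₂) vertex
  have step1 : ∀ X : {x : L // x ∉ LieAlgebra.center F L},
      ∃ (α₁ α₂ : F) (hA : (α₁ • e₁ + α₂ • e₂ + (0:F) • e₃ + (0:F) • e₄) ∉
          LieAlgebra.center F L),
        ¬(α₁ = 0 ∧ α₂ = 0) ∧ (commutingGraph F L).edist X ⟨_, hA⟩ ≤ 1 := by
    rintro ⟨x, hx⟩
    obtain ⟨z, a₁, a₂, a₃, a₄, hz, rfl⟩ := hdec x
    by_cases h12 : a₁ = 0 ∧ a₂ = 0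
    · refine ⟨1, 0, hnc0 1 0 0 0 (by simp), by simp, ?_⟩
      refine (SimpleGraph.edist_eq_one_iff_adj.mpr ?_).le
      constructor
      · intro hXA
        exact hne z 0 a₁ a₂ a₃ a₄ 1 0 0 0 hz hz0 (by simp [h12.1])
          (by simpa using congrArg Subtype.val hXA)
      · have hb := hbrk z 0 hz hz0 a₁ a₂ a₃ a₄ 1 0 0 0
        rw [zero_add] at hb
        show ⁅z + (a₁ • e₁ + a₂ • e₂ + a₃ • e₃ + a₄ • e₄),
          (1:F) • e₁ + (0:F) • e₂ + (0:F) • e₃ + (0:F) • e₄⁆ = 0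
        rw [hb, h12.2]; module
    · refine ⟨a₁, a₂, hnc0 a₁ a₂ 0 0 (by tauto), by tauto, ?_⟩
      by_cases hXA : z + (a₁ • e₁ + a₂ • e₂ + a₃ • e₃ + a₄ • e₄) =
          a₁ • e₁ + a₂ • e₂ + (0:F) • e₃ + (0:F) • e₄
      · have : (⟨_, hx⟩ : {x : L // x ∉ LieAlgebra.center F L}) = ⟨_, hnc0 a₁ a₂ 0 0 (by tauto)⟩ :=
          Subtype.ext hXA
        rw [this, SimpleGraph.edist_self]
        exact zero_le_one
      · refine (SimpleGraph.edist_eq_one_iff_adj.mpr ?_).le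
        refine ⟨fun h => hXA (congrArg Subtype.val h), ?_⟩
        have hb := hbrk z 0 hz hz0 a₁ a₂ a₃ a₄ a₁ a₂ 0 0
        rw [zero_add] at hb
        show ⁅z + (a₁ • e₁ + a₂ • e₂ + a₃ • e₃ + a₄ • e₄),
          a₁ • e₁ + a₂ • e₂ + (0:F) • e₃ + (0:F) • e₄⁆ = 0
        rw [hb]; module
  -- step 2 : every vertex is within distance 1 of a pure (e₃,e₄) vertex
  have step2 : ∀ X : {x : L // x ∉ LieAlgebra.center F L},
      ∃ (β₃ β₄ : F) (hB : ((0:F) • e₁ + (0:F) • e₂ + β₃ • e₃ + β₄ • e₄) ∉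
          LieAlgebra.center F L),
        ¬(β₃ = 0 ∧ β₄ = 0) ∧ (commutingGraph F L).edist X ⟨_, hB⟩ ≤ 1 := by
    rintro ⟨x, hx⟩
    obtain ⟨z, a₁, a₂, a₃, a₄, hz, rfl⟩ := hdec x
    by_cases h34 : a₃ = 0 ∧ a₄ = 0
    · refine ⟨1, 0, hnc0 0 0 1 0 (by simp), by simp, ?_⟩
      refine (SimpleGraph.edist_eq_one_iff_adj.mpr ?_).le
      constructor
      · intro hXA
        exact hne z 0 a₁ a₂ a₃ a₄ 0 0 1 0 hz hz0 (by simp [h34.1])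
          (by simpa using congrArg Subtype.val hXA)
      · have hb := hbrk z 0 hz hz0 a₁ a₂ a₃ a₄ 0 0 1 0
        rw [zero_add] at hb
        show ⁅z + (a₁ • e₁ + a₂ • e₂ + a₃ • e₃ + a₄ • e₄),
          (0:F) • e₁ + (0:F) • e₂ + (1:F) • e₃ + (0:F) • e₄⁆ = 0
        rw [hb, h34.2]; module
    · refine ⟨a₃, a₄, hnc0 0 0 a₃ a₄ (by tauto), by tauto, ?_⟩
      by_cases hXA : z + (a₁ • e₁ + a₂ • e₂ + a₃ • e₃ + a₄ • e₄) =
          (0:F) • e₁ + (0:F) • e₂ + a₃ • e₃ + a₄ • e₄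
      · have : (⟨_, hx⟩ : {x : L // x ∉ LieAlgebra.center F L}) = ⟨_, hnc0 0 0 a₃ a₄ (by tauto)⟩ :=
          Subtype.ext hXA
        rw [this, SimpleGraph.edist_self]
        exact zero_le_one
      · refine (SimpleGraph.edist_eq_one_iff_adj.mpr ?_).le
        refine ⟨fun h => hXA (congrArg Subtype.val h), ?_⟩
        have hb := hbrk z 0 hz hz0 a₁ a₂ a₃ a₄ 0 0 a₃ a₄
        rw [zero_add] at hb
        show ⁅z + (a₁ • e₁ + a₂ • e₂ + a₃ • e₃ + a₄ • e₄),
          (0:F) • e₁ + (0:F) • e₂ + a₃ • e₃ + a₄ • e₄⁆ = 0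
        rw [hb]; module
  -- the middle edge
  have mid : ∀ (α₁ α₂ β₃ β₄ : F)
      (hA : (α₁ • e₁ + α₂ • e₂ + (0:F) • e₃ + (0:F) • e₄) ∉ LieAlgebra.center F L)
      (hB : ((0:F) • e₁ + (0:F) • e₂ + β₃ • e₃ + β₄ • e₄) ∉ LieAlgebra.center F L),
      ¬(α₁ = 0 ∧ α₂ = 0) →
      (commutingGraph F L).Adj ⟨_, hA⟩ ⟨_, hB⟩ := by
    intro α₁ α₂ β₃ β₄ hA hB hα
    refine ⟨fun h => hne0 α₁ α₂ 0 0 0 0 β₃ β₄ (by tauto) (congrArg Subtype.val h), ?_⟩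
    show ⁅α₁ • e₁ + α₂ • e₂ + (0:F) • e₃ + (0:F) • e₄,
      (0:F) • e₁ + (0:F) • e₂ + β₃ • e₃ + β₄ • e₄⁆ = 0
    rw [hbrk0]; module
  -- every pair of vertices is at distance at most 3
  have key3 : ∀ X Y, (commutingGraph F L).edist X Y ≤ 3 := by
    intro X Y
    obtain ⟨α₁, α₂, hA, hα, hXA⟩ := step1 X
    obtain ⟨β₃, β₄, hB, hβ, hYB⟩ := step2 Y
    have hAB : (commutingGraph F L).edist ⟨_, hA⟩ ⟨_, hB⟩ ≤ 1 :=
      (SimpleGraph.edist_eq_one_iff_adj.mpr (mid α₁ α₂ β₃ β₄ hA hB hα)).le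
    have hBY : (commutingGraph F L).edist ⟨_, hB⟩ Y ≤ 1 := by
      rw [SimpleGraph.edist_comm]; exact hYB
    calc (commutingGraph F L).edist X Y
        ≤ (commutingGraph F L).edist X ⟨_, hA⟩ + (commutingGraph F L).edist ⟨_, hA⟩ Y :=
          SimpleGraph.edist_triangle
      _ ≤ (commutingGraph F L).edist X ⟨_, hA⟩ +
          ((commutingGraph F L).edist ⟨_, hA⟩ ⟨_, hB⟩ + (commutingGraph F L).edist ⟨_, hB⟩ Y) :=
          add_le_add le_rfl SimpleGraph.edist_triangle
      _ ≤ 1 + (1 + 1) := add_le_add hXA (add_le_add hAB hBY)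
      _ = 3 := by norm_num
  have hconn : (commutingGraph F L).Connected := by
    rw [SimpleGraph.connected_iff]
    refine ⟨fun X Y => SimpleGraph.reachable_of_edist_ne_top ?_,
      ⟨⟨_, hnc0 1 0 0 0 (by simp)⟩⟩⟩
    exact ((key3 X Y).trans_lt (lt_top_iff_ne_top.mpr (by simp))).ne
  refine ⟨hconn, ?_⟩
  -- the special pair at distance exactly 3
  have hX0 := hnc0 1 0 1 0 (by simp)
  have hY0 := hnc0 0 1 0 1 (by simp)
  have hlow : ¬ (commutingGraph F L).edist ⟨_, hX0⟩ ⟨_, hY0⟩ ≤ 2 := by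
    intro hle
    have hntop : (commutingGraph F L).edist ⟨_, hX0⟩ ⟨_, hY0⟩ ≠ ⊤ := by
      intro h; rw [h] at hle; exact (by norm_num : ¬ (⊤ : ℕ∞) ≤ 2) hle
    obtain ⟨p, hp⟩ := SimpleGraph.exists_walk_of_edist_ne_top hntop
    have hplen : p.length ≤ 2 := by
      have : (p.length : ℕ∞) ≤ 2 := by rw [hp]; exact hle
      exact_mod_cast this
    rcases walk_short p hplen with h0 | h1 | ⟨W, hXW, hWY⟩
    · exact hne0 1 0 1 0 0 1 0 1 (by simp) (congrArg Subtype.val h0)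
    · have hb := h1.2
      rw [show ((⟨_, hX0⟩ : {x : L // x ∉ LieAlgebra.center F L}) : L) =
        (1:F) • e₁ + (0:F) • e₂ + (1:F) • e₃ + (0:F) • e₄ from rfl,
        show ((⟨_, hY0⟩ : {x : L // x ∉ LieAlgebra.center F L}) : L) =
        (0:F) • e₁ + (1:F) • e₂ + (0:F) • e₃ + (1:F) • e₄ from rfl, hbrk0] at hb
      have h10 := (hpair _ _ hb).1
      norm_num at h10
    · obtain ⟨w, hw⟩ := W
      obtain ⟨z, c₁, c₂, c₃, c₄, hz, rfl⟩ := hdec w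
      have hb1 := hbrk 0 z hz0 hz 1 0 1 0 c₁ c₂ c₃ c₄
      rw [zero_add] at hb1
      have e1 := hXW.2
      rw [show ((⟨_, hX0⟩ : {x : L // x ∉ LieAlgebra.center F L}) : L) =
        (1:F) • e₁ + (0:F) • e₂ + (1:F) • e₃ + (0:F) • e₄ from rfl] at e1
      rw [hb1] at e1
      have r1 := hpair _ _ e1
      have hb2 := hbrk z 0 hz hz0 c₁ c₂ c₃ c₄ 0 1 0 1
      rw [zero_add] at hb2
      have e2 := hWY.2
      rw [show ((⟨_, hY0⟩ : {x : L // x ∉ LieAlgebra.center F L}) : L) =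
        (0:F) • e₁ + (1:F) • e₂ + (0:F) • e₃ + (1:F) • e₄ from rfl] at e2
      rw [hb2] at e2
      have r2 := hpair _ _ e2
      apply hw
      refine (hnc z c₁ c₂ c₃ c₄ hz).mpr ⟨?_, ?_, ?_, ?_⟩
      · have := r2.1; simpa using this
      · have := r1.1; simpa using this
      · have := r2.2; simpa using this
      · have := r1.2; simpa using this
  have h3le : (3 : ℕ∞) ≤ (commutingGraph F L).edist ⟨_, hX0⟩ ⟨_, hY0⟩ := by
    have := Order.add_one_le_of_lt (lt_of_not_ge hlow)
    rw [show (2:ℕ∞) + 1 = 3 by norm_num] at this; exact this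
  exact le_antisymm (SimpleGraph.ediam_le_of_edist_le fun u v => key3 u v)
    (h3le.trans SimpleGraph.edist_le_ediam)
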